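/- If P is a positive integer whose parity sequence is purely periodic with period n \ge 1, i.e. T^{k+n}(P) and T^k(P) have the same parity for every k \ge 0, then the orbit itself is periodic with period n: T^n(P) = P. Equivalently, there is no positive integer generating a \beta-periodic Collatz sequence (structurally periodic but not numerically periodic) of infinite length. -/

import Mathlib

open Filter

/-- The (accelerated) Collatz map `T(P) = P/2` if `P` even, `(3P+1)/2` if `P` odd. -/
def collatz (p : ℕ) : ℕ := if p % 2 = 0 then p / 2 else (3 * p + 1) / 2

/-- `collatzOddCount P n = m_n(P)`, the number of `k < n` with `T^k(P)` odd. -/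
def collatzOddCount (P n : ℕ) : ℕ :=
  ((Finset.range n).filter fun k => collatz^[k] P % 2 = 1).card

/-- The principal coefficient `A_n(P) = 3^{m_n(P)} / 2^n`. -/
noncomputable def collatzA (P n : ℕ) : ℝ := 3 ^ collatzOddCount P n / 2 ^ n

/-- The adjustment coefficient `B_n(P) = T^n(P) - A_n(P) * P`. -/
noncomputable def collatzB (P n : ℕ) : ℝ := (collatz^[n] P : ℝ) - collatzA P n * P

lemma two_mul_collatz (x : ℕ) : 2 * collatz x = (1 + 2 * (x % 2)) * x + x % 2 := by
  rcases Nat.mod_two_eq_zero_or_one x with h | h <;> simp [collatz, h] <;> omega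

lemma collatz_key (n : ℕ) : ∀ x y : ℕ,
    (∀ k < n, collatz^[k] x % 2 = collatz^[k] y % 2) →
    2 ^ n * ((collatz^[n] x : ℤ) - collatz^[n] y)
      = 3 ^ collatzOddCount x n * ((x : ℤ) - y) := by
  induction n with
  | zero => intro x y _; simp [collatzOddCount]
  | succ n ih =>
    intro x y h
    have hxy := ih x y (fun k hk => h k (Nat.lt_succ_of_lt hk))
    have hn2 : collatz^[n] x % 2 = collatz^[n] y % 2 := h n (Nat.lt_succ_self n)
    have hcount : collatzOddCount x (n + 1)
        = collatzOddCount x n + (if collatz^[n] x % 2 = 1 then 1 else 0) := by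
      simp [collatzOddCount, Finset.range_add_one, Finset.filter_insert]
      split <;> simp [Finset.card_insert_of_notMem]
    rw [Function.iterate_succ_apply', Function.iterate_succ_apply', hcount]
    set a := collatz^[n] x with ha
    set b := collatz^[n] y with hb
    have hpx := two_mul_collatz a
    have hpy := two_mul_collatz b
    rcases Nat.mod_two_eq_zero_or_one a with hp | hp
    · have hq : b % 2 = 0 := hn2 ▸ hp
      rw [hp] at hpx; rw [hq] at hpy
      have hxZ : (2 : ℤ) * collatz a = a := by exact_mod_cast congrArg (Nat.cast : ℕ → ℤ) (by omega : 2 * collatz a = a)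
      have hyZ : (2 : ℤ) * collatz b = b := by exact_mod_cast congrArg (Nat.cast : ℕ → ℤ) (by omega : 2 * collatz b = b)
      simp only [hp]
      norm_num
      calc 2 ^ (n + 1) * ((collatz a : ℤ) - collatz b)
          = 2 ^ n * (2 * (collatz a : ℤ) - 2 * collatz b) := by ring
        _ = 2 ^ n * ((a : ℤ) - b) := by rw [hxZ, hyZ]
        _ = 3 ^ collatzOddCount x n * ((x : ℤ) - y) := hxy
    · have hq : b % 2 = 1 := hn2 ▸ hp
      rw [hp] at hpx; rw [hq] at hpy
      have hxZ : (2 : ℤ) * collatz a = 3 * a + 1 := by exact_mod_cast congrArg (Nat.cast : ℕ → ℤ) (by omega : 2 * collatz a = 3 * a + 1)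
      have hyZ : (2 : ℤ) * collatz b = 3 * b + 1 := by exact_mod_cast congrArg (Nat.cast : ℕ → ℤ) (by omega : 2 * collatz b = 3 * b + 1)
      simp only [hp]
      norm_num
      calc 2 ^ (n + 1) * ((collatz a : ℤ) - collatz b)
          = 2 ^ n * (2 * (collatz a : ℤ) - 2 * collatz b) := by ring
        _ = 3 * (2 ^ n * ((a : ℤ) - b)) := by rw [hxZ, hyZ]; ring
        _ = 3 * (3 ^ collatzOddCount x n * ((x : ℤ) - y)) := by rw [hxy]
        _ = 3 ^ (collatzOddCount x n + 1) * ((x : ℤ) - y) := by ring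

theorem stmt_17 (P : ℕ) (hP : 0 < P) (n : ℕ) (hn : 1 ≤ n)
    (hper : ∀ k : ℕ, collatz^[k + n] P % 2 = collatz^[k] P % 2) :
    collatz^[n] P = P := by
  -- parity of the full orbit is n-periodic
  have hper' : ∀ j k : ℕ, collatz^[k + j * n] P % 2 = collatz^[k] P % 2 := by
    intro j
    induction j with
    | zero => simp
    | succ j ih =>
      intro k
      have : k + (j + 1) * n = (k + j * n) + n := by ring
      rw [this, hper (k + j * n), ih k]
  set m := collatzOddCount P n with hm
  set Q : ℕ → ℕ := fun j => collatz^[j * n] P with hQ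
  have hQpar : ∀ j k, collatz^[k] (Q j) % 2 = collatz^[k] P % 2 := by
    intro j k
    have : collatz^[k] (Q j) = collatz^[k + j * n] P := by
      rw [hQ]; exact (Function.iterate_add_apply collatz k (j * n) P).symm
    rw [this, hper' j k]
  have hQcount : ∀ j, collatzOddCount (Q j) n = m := by
    intro j
    unfold collatzOddCount
    congr 1
    apply Finset.filter_congr
    intro k _
    simp [hQpar j k]
  have hQsucc : ∀ j, collatz^[n] (Q j) = Q (j + 1) := by
    intro j
    rw [hQ]
    simp only
    rw [← Function.iterate_add_apply]
    congr 1
    ring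
  set R : ℕ → ℤ := fun j => (Q (j + 1) : ℤ) - Q j with hR
  have hrec : ∀ j, 2 ^ n * R (j + 1) = 3 ^ m * R j := by
    intro j
    have := collatz_key n (Q (j + 1)) (Q j)
      (fun k _ => (hQpar (j + 1) k).trans (hQpar j k).symm)
    rw [hQcount (j + 1), hQsucc (j + 1), hQsucc j] at this
    exact this
  have hiter : ∀ j, 3 ^ (m * j) * R 0 = 2 ^ (n * j) * R j := by
    intro j
    induction j with
    | zero => simp
    | succ j ih =>
      rw [show m * (j + 1) = m * j + m from by ring, pow_add,
        show n * (j + 1) = n * j + n from by ring, pow_add]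
      linear_combination 3 ^ m * ih - 2 ^ (n * j) * hrec j
  have hdvd : ∀ j, (2 : ℤ) ^ (n * j) ∣ R 0 := by
    intro j
    have h1 : (2 : ℤ) ^ (n * j) ∣ 3 ^ (m * j) * R 0 := ⟨R j, hiter j⟩
    have hcop : IsCoprime ((2 : ℤ) ^ (n * j)) (3 ^ (m * j)) := by
      apply IsCoprime.pow
      rw [Int.isCoprime_iff_gcd_eq_one]; decide
    exact hcop.dvd_of_dvd_mul_left h1
  have hR0 : R 0 = 0 := by
    by_contra h
    set j := (R 0).natAbs with hj
    have h1 : (2 : ℤ) ^ (n * j) ≤ |R 0| :=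
      Int.le_of_dvd (abs_pos.mpr h) ((dvd_abs _ _).mpr (hdvd j))
    have h2 : (2 : ℕ) ^ (n * j) ≤ j := by
      have : ((2 : ℕ) ^ (n * j) : ℤ) ≤ (j : ℤ) := by
        rw [Int.abs_eq_natAbs] at h1; exact_mod_cast h1
      exact_mod_cast this
    have h3 : j < 2 ^ (n * j) :=
      lt_of_lt_of_le (Nat.lt_two_pow_self (n := j)) (Nat.pow_le_pow_right (by norm_num) (Nat.le_mul_of_pos_left j hn))
    omega
  have : (Q 1 : ℤ) = Q 0 := by have := hR0; rw [hR] at this; simp at this; linarith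
  have hQ1 : Q 1 = Q 0 := by exact_mod_cast this
  simpa [hQ] using hQ1
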